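/- For Zipf weights w_i = 1/(i·H_n) with H_n = ∑_{k=1}^n 1/k, the quantity E[T] = H_n · ∑_{r=2}^n 1/H_r satisfies n − 1 ≤ E[T] ≤ n + O(n/ln n); in particular E[T]/n → 1 as n → ∞. -/

import Mathlib

open Finset Real

private noncomputable def zH (n : ℕ) : ℝ := ∑ k ∈ Finset.Icc 1 n, (1 : ℝ) / k

private lemma zH_eq_harmonic (n : ℕ) : zH n = (harmonic n : ℝ) := by
  simp [zH, harmonic_eq_sum_Icc, one_div]

private lemma zH_one_le {r : ℕ} (hr : 1 ≤ r) : 1 ≤ zH r := by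
  have h1 : (1 : ℕ) ∈ Finset.Icc 1 r := by simp [hr]
  have := Finset.single_le_sum (f := fun k : ℕ => (1 : ℝ) / k)
    (fun i _ => by positivity) h1
  simpa [zH] using this

private lemma zH_pos {r : ℕ} (hr : 1 ≤ r) : 0 < zH r := lt_of_lt_of_le one_pos (zH_one_le hr)

private lemma zH_mono {r n : ℕ} (h : r ≤ n) : zH r ≤ zH n := by
  apply Finset.sum_le_sum_of_subset_of_nonneg (Finset.Icc_subset_Icc_right h)
  intro i _ _; positivity

private lemma zH_le (n : ℕ) : zH n ≤ 1 + Real.log n := by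
  rw [zH_eq_harmonic]; exact harmonic_le_one_add_log n

private lemma zlog_le_H (r : ℕ) : Real.log r ≤ zH r := by
  have h1 : Real.log r ≤ Real.log (r + 1) := by
    rcases Nat.eq_zero_or_pos r with h | h
    · simp [h]
    · apply Real.log_le_log (by positivity)
      push_cast; linarith
  calc Real.log r ≤ Real.log ((r : ℕ) + 1 : ℕ) := by push_cast; exact h1
    _ ≤ (harmonic r : ℝ) := log_add_one_le_harmonic r
    _ = zH r := (zH_eq_harmonic r).symm

private lemma zsum_H {n : ℕ} (hn : 1 ≤ n) :
    ∑ r ∈ Finset.Icc 1 n, zH r = (n + 1) * zH n - n := by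
  induction n, hn using Nat.le_induction with
  | base => simp [zH]
  | succ n hn ih =>
      rw [Finset.sum_Icc_succ_top (by omega : 1 ≤ n + 1), ih]
      have hz : zH (n + 1) = zH n + 1 / (n + 1 : ℕ) := by
        unfold zH
        rw [Finset.sum_Icc_succ_top (by omega : 1 ≤ n + 1)]
      push_cast [hz]
      have h0 : ((n : ℝ) + 1) ≠ 0 := by positivity
      field_simp
      ring

private lemma zsum_diff {n : ℕ} (hn : 2 ≤ n) :
    ∑ r ∈ Finset.Icc 2 n, (zH n - zH r) ≤ (n : ℝ) := by
  have h1mem : (1 : ℕ) ∈ Finset.Icc 1 n := by simp; omega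
  have herase : (Finset.Icc 1 n).erase 1 = Finset.Icc 2 n := by
    rw [Finset.Icc_erase_left, ← Finset.Icc_add_one_left_eq_Ioc]; rfl
  have hsplit : zH 1 + ∑ r ∈ Finset.Icc 2 n, zH r = ∑ r ∈ Finset.Icc 1 n, zH r := by
    rw [← herase]; exact Finset.add_sum_erase _ _ h1mem
  have hid := zsum_H (by omega : 1 ≤ n)
  have hz1 : zH 1 = 1 := by simp [zH]
  have hcard : ((Finset.Icc 2 n).card : ℝ) = (n : ℝ) - 1 := by
    rw [Nat.card_Icc]
    have h2 : n + 1 - 2 = n - 1 := by omega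
    rw [h2, Nat.cast_sub (by omega)]; simp
  rw [Finset.sum_sub_distrib, Finset.sum_const, nsmul_eq_mul, hcard]
  have hH1 : 1 ≤ zH n := zH_one_le (by omega)
  nlinarith [hsplit, hid, hz1]

private lemma zupper {n : ℕ} (hn : 2 ≤ n) :
    ∑ r ∈ Finset.Icc 2 n, zH n / zH r ≤ (n : ℝ) + 22 * ((n : ℝ) / Real.log n) := by
  have hlogpos : 0 < Real.log n := Real.log_pos (by exact_mod_cast (by omega : (1:ℕ) < n))
  have hnpos : (0:ℝ) < n := by positivity
  -- rewrite each term as 1 + (H n - H r)/H r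
  have hterm : ∀ r ∈ Finset.Icc 2 n, zH n / zH r = 1 + (zH n - zH r) / zH r := by
    intro r hr
    rw [Finset.mem_Icc] at hr
    have hp : zH r ≠ 0 := ne_of_gt (zH_pos (by omega))
    field_simp
    ring
  rw [Finset.sum_congr rfl hterm, Finset.sum_add_distrib, Finset.sum_const, nsmul_eq_mul, mul_one]
  have hcard : ((Finset.Icc 2 n).card : ℝ) = (n : ℝ) - 1 := by
    rw [Nat.card_Icc]
    have h2 : n + 1 - 2 = n - 1 := by omega
    rw [h2, Nat.cast_sub (by omega)]; simp
  rw [hcard]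
  -- it suffices to bound S := ∑ (H n - H r)/H r
  have hS : ∑ r ∈ Finset.Icc 2 n, (zH n - zH r) / zH r ≤ 22 * ((n : ℝ) / Real.log n) := by
    rw [← Finset.sum_filter_add_sum_filter_not (Finset.Icc 2 n) (fun r => r * r < n)]
    have hsmall : ∑ r ∈ (Finset.Icc 2 n).filter (fun r => r * r < n),
        (zH n - zH r) / zH r ≤ 20 * ((n : ℝ) / Real.log n) := by
      have hsub : (Finset.Icc 2 n).filter (fun r => r * r < n) ⊆ Finset.Icc 2 (Nat.sqrt n) := by
        intro r hr
        rw [Finset.mem_filter, Finset.mem_Icc] at hr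
        rw [Finset.mem_Icc]
        exact ⟨hr.1.1, Nat.le_sqrt.mpr (le_of_lt hr.2)⟩
      have hcards : (((Finset.Icc 2 n).filter (fun r => r * r < n)).card : ℝ) ≤ Real.sqrt n := by
        calc (((Finset.Icc 2 n).filter (fun r => r * r < n)).card : ℝ)
            ≤ ((Finset.Icc 2 (Nat.sqrt n)).card : ℝ) := by
              exact_mod_cast Finset.card_le_card hsub
          _ ≤ (Nat.sqrt n : ℝ) := by
              rw [Nat.card_Icc]
              have h9 : n.sqrt + 1 - 2 ≤ n.sqrt := by omega
              exact_mod_cast h9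
          _ ≤ Real.sqrt n := by
              rw [show ((Nat.sqrt n : ℝ)) = Real.sqrt ((Nat.sqrt n : ℝ)^2) by
                rw [Real.sqrt_sq (by positivity)]]
              apply Real.sqrt_le_sqrt
              exact_mod_cast Nat.sqrt_le' n
      have htb : ∀ r ∈ (Finset.Icc 2 n).filter (fun r => r * r < n),
          (zH n - zH r) / zH r ≤ 1 + Real.log n := by
        intro r hr
        rw [Finset.mem_filter, Finset.mem_Icc] at hr
        have h1 : 1 ≤ zH r := zH_one_le (by omega)
        have h2 : zH n - zH r ≤ 1 + Real.log n := by
          have := zH_pos (by omega : 1 ≤ r)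
          linarith [zH_le n]
        calc (zH n - zH r) / zH r ≤ (zH n - zH r) / 1 := by
              apply div_le_div_of_nonneg_left _ one_pos h1
              · linarith [zH_mono hr.1.2]
          _ = zH n - zH r := by ring
          _ ≤ 1 + Real.log n := h2
      have hlogn_nonneg : (0:ℝ) ≤ 1 + Real.log n := by positivity
      calc ∑ r ∈ (Finset.Icc 2 n).filter (fun r => r * r < n), (zH n - zH r) / zH r
          ≤ ∑ _r ∈ (Finset.Icc 2 n).filter (fun r => r * r < n), (1 + Real.log n) :=
            Finset.sum_le_sum htb
        _ = (((Finset.Icc 2 n).filter (fun r => r * r < n)).card : ℝ) * (1 + Real.log n) := by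
            rw [Finset.sum_const, nsmul_eq_mul]
        _ ≤ Real.sqrt n * (1 + Real.log n) := by
            apply mul_le_mul_of_nonneg_right hcards hlogn_nonneg
        _ ≤ 20 * ((n : ℝ) / Real.log n) := by
            rw [show (20:ℝ) * ((n : ℝ) / Real.log n) = 20 * (n:ℝ) / Real.log n by ring,
              le_div_iff₀ hlogpos]
            set q := (n : ℝ) ^ (1/4 : ℝ) with hqdef
            have h4 : Real.log n ≤ 4 * q := by
              have := Real.log_le_rpow_div (le_of_lt hnpos) (by norm_num : (0:ℝ) < 1/4)
              rw [hqdef]; linarith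
            have h14 : (1:ℝ) ≤ q :=
              Real.one_le_rpow (by exact_mod_cast (by omega : 1 ≤ n)) (by norm_num)
            have hq : q * q = Real.sqrt n := by
              rw [hqdef, ← Real.rpow_add hnpos, Real.sqrt_eq_rpow]
              norm_num
            have hss : Real.sqrt n * Real.sqrt n = (n:ℝ) := Real.mul_self_sqrt (le_of_lt hnpos)
            have hsq_nonneg : (0:ℝ) ≤ Real.sqrt n := Real.sqrt_nonneg _
            have hq0 : (0:ℝ) ≤ q := by linarith
            have h5 : 1 + Real.log n ≤ 5 * q := by linarith
            have h7 : (1 + Real.log n) * Real.log n ≤ 20 * Real.sqrt n := by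
              nlinarith [mul_le_mul h5 h4 hlogpos.le (by positivity : (0:ℝ) ≤ 5 * q)]
            calc Real.sqrt n * (1 + Real.log n) * Real.log n
                = Real.sqrt n * ((1 + Real.log n) * Real.log n) := by ring
              _ ≤ Real.sqrt n * (20 * Real.sqrt n) :=
                  mul_le_mul_of_nonneg_left h7 hsq_nonneg
              _ = 20 * (n : ℝ) := by
                  rw [show Real.sqrt (n:ℝ) * (20 * Real.sqrt (n:ℝ))
                    = 20 * (Real.sqrt (n:ℝ) * Real.sqrt (n:ℝ)) by ring, hss]
    have hlarge : ∑ r ∈ (Finset.Icc 2 n).filter (fun r => ¬ r * r < n),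
        (zH n - zH r) / zH r ≤ 2 * ((n : ℝ) / Real.log n) := by
      have htb : ∀ r ∈ (Finset.Icc 2 n).filter (fun r => ¬ r * r < n),
          (zH n - zH r) / zH r ≤ (zH n - zH r) * (2 / Real.log n) := by
        intro r hr
        rw [Finset.mem_filter, Finset.mem_Icc] at hr
        have hrn : n ≤ r * r := le_of_not_gt hr.2
        have hlogr : Real.log n / 2 ≤ zH r := by
          have hr0 : ((r : ℝ)) ≠ 0 := by
            have : 0 < r := by omega
            exact_mod_cast this.ne'
          have h1 : Real.log n ≤ Real.log ((r : ℝ) * r) := by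
            apply Real.log_le_log hnpos
            exact_mod_cast hrn
          rw [Real.log_mul hr0 hr0] at h1
          linarith [zlog_le_H r]
        have hnum : 0 ≤ zH n - zH r := by linarith [zH_mono hr.1.2]
        have hd : 0 < Real.log n / 2 := by positivity
        calc (zH n - zH r) / zH r ≤ (zH n - zH r) / (Real.log n / 2) :=
              div_le_div_of_nonneg_left hnum hd hlogr
          _ = (zH n - zH r) * (2 / Real.log n) := by
              rw [div_div_eq_mul_div, mul_div_assoc]
      calc ∑ r ∈ (Finset.Icc 2 n).filter (fun r => ¬ r * r < n), (zH n - zH r) / zH r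
          ≤ ∑ r ∈ (Finset.Icc 2 n).filter (fun r => ¬ r * r < n),
              (zH n - zH r) * (2 / Real.log n) := Finset.sum_le_sum htb
        _ = (∑ r ∈ (Finset.Icc 2 n).filter (fun r => ¬ r * r < n), (zH n - zH r))
              * (2 / Real.log n) := by rw [← Finset.sum_mul]
        _ ≤ (∑ r ∈ Finset.Icc 2 n, (zH n - zH r)) * (2 / Real.log n) := by
            apply mul_le_mul_of_nonneg_right _ (by positivity)
            apply Finset.sum_le_sum_of_subset_of_nonneg (Finset.filter_subset _ _)
            intro i hi _
            rw [Finset.mem_Icc] at hi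
            linarith [zH_mono hi.2]
        _ ≤ (n : ℝ) * (2 / Real.log n) := by
            apply mul_le_mul_of_nonneg_right (zsum_diff hn) (by positivity)
        _ = 2 * ((n : ℝ) / Real.log n) := by ring
    linarith
  linarith
theorem zipf_expected_T :
    (∀ n : ℕ, 1 ≤ n →
      (n : ℝ) - 1 ≤ (∑ k ∈ Finset.Icc 1 n, (1 : ℝ) / k) *
        ∑ r ∈ Finset.Icc 2 n, 1 / (∑ k ∈ Finset.Icc 1 r, (1 : ℝ) / k)) ∧
    (∃ C : ℝ, 0 < C ∧ ∀ n : ℕ, 2 ≤ n →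
      (∑ k ∈ Finset.Icc 1 n, (1 : ℝ) / k) *
        (∑ r ∈ Finset.Icc 2 n, 1 / (∑ k ∈ Finset.Icc 1 r, (1 : ℝ) / k))
        ≤ n + C * ((n : ℝ) / Real.log n)) ∧
    Filter.Tendsto
      (fun n : ℕ =>
        ((∑ k ∈ Finset.Icc 1 n, (1 : ℝ) / k) *
          ∑ r ∈ Finset.Icc 2 n, 1 / (∑ k ∈ Finset.Icc 1 r, (1 : ℝ) / k)) / n)
      Filter.atTop (nhds 1) := by
  have hET : ∀ n : ℕ,
      (∑ k ∈ Finset.Icc 1 n, (1 : ℝ) / k) *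
        ∑ r ∈ Finset.Icc 2 n, 1 / (∑ k ∈ Finset.Icc 1 r, (1 : ℝ) / k)
      = ∑ r ∈ Finset.Icc 2 n, zH n / zH r := by
    intro n
    rw [Finset.mul_sum]
    exact Finset.sum_congr rfl fun r _ => by rw [mul_one_div]; rfl
  have lower : ∀ n : ℕ, 1 ≤ n →
      (n : ℝ) - 1 ≤ (∑ k ∈ Finset.Icc 1 n, (1 : ℝ) / k) *
        ∑ r ∈ Finset.Icc 2 n, 1 / (∑ k ∈ Finset.Icc 1 r, (1 : ℝ) / k) := by
    intro n hn
    rw [hET]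
    have hcard : ((Finset.Icc 2 n).card : ℝ) = (n : ℝ) - 1 := by
      rw [Nat.card_Icc]
      have h2 : n + 1 - 2 = n - 1 := by omega
      rw [h2, Nat.cast_sub hn]; simp
    calc (n : ℝ) - 1 = ∑ _r ∈ Finset.Icc 2 n, (1 : ℝ) := by
          rw [Finset.sum_const, nsmul_eq_mul, mul_one, hcard]
      _ ≤ ∑ r ∈ Finset.Icc 2 n, zH n / zH r := by
          apply Finset.sum_le_sum
          intro r hr
          rw [Finset.mem_Icc] at hr
          rw [le_div_iff₀ (zH_pos (by omega))]
          simpa using zH_mono hr.2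
  have upper : ∀ n : ℕ, 2 ≤ n →
      (∑ k ∈ Finset.Icc 1 n, (1 : ℝ) / k) *
        (∑ r ∈ Finset.Icc 2 n, 1 / (∑ k ∈ Finset.Icc 1 r, (1 : ℝ) / k))
        ≤ n + 22 * ((n : ℝ) / Real.log n) := by
    intro n hn
    rw [hET]
    exact zupper hn
  refine ⟨lower, ⟨22, by norm_num, upper⟩, ?_⟩
  -- squeeze
  have hlow : Filter.Tendsto (fun n : ℕ => ((n : ℝ) - 1) / n) Filter.atTop (nhds 1) := by
    have h1 : Filter.Tendsto (fun n : ℕ => 1 - 1 / (n : ℝ)) Filter.atTop (nhds 1) := by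
      have := tendsto_one_div_atTop_nhds_zero_nat (𝕜 := ℝ)
      simpa using (tendsto_const_nhds (x := (1:ℝ)) (f := Filter.atTop)).sub this
    apply h1.congr'
    filter_upwards [Filter.eventually_ge_atTop 1] with n hn
    have : (n : ℝ) ≠ 0 := by positivity
    field_simp
  have hhigh : Filter.Tendsto (fun n : ℕ => 1 + 22 / Real.log n) Filter.atTop (nhds 1) := by
    have hlog : Filter.Tendsto (fun n : ℕ => Real.log n) Filter.atTop Filter.atTop :=
      Real.tendsto_log_atTop.comp tendsto_natCast_atTop_atTop
    have hinv : Filter.Tendsto (fun n : ℕ => (Real.log n)⁻¹) Filter.atTop (nhds 0) :=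
      tendsto_inv_atTop_zero.comp hlog
    have : Filter.Tendsto (fun n : ℕ => 1 + 22 * (Real.log n)⁻¹) Filter.atTop (nhds (1 + 22 * 0)) :=
      tendsto_const_nhds.add (tendsto_const_nhds.mul hinv)
    simpa [div_eq_mul_inv] using this
  apply tendsto_of_tendsto_of_tendsto_of_le_of_le' hlow hhigh
  · filter_upwards [Filter.eventually_ge_atTop 2] with n hn
    have hnp : (0:ℝ) < (n : ℝ) := by
      have : 0 < n := by omega
      exact_mod_cast this
    exact (div_le_div_iff_of_pos_right hnp).mpr (lower n (by omega))
  · filter_upwards [Filter.eventually_ge_atTop 2] with n hn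
    have hnp : (0:ℝ) < (n : ℝ) := by
      have : 0 < n := by omega
      exact_mod_cast this
    rw [div_le_iff₀ hnp]
    calc (∑ k ∈ Finset.Icc 1 n, (1 : ℝ) / k) *
          ∑ r ∈ Finset.Icc 2 n, 1 / (∑ k ∈ Finset.Icc 1 r, (1 : ℝ) / k)
        ≤ (n : ℝ) + 22 * ((n : ℝ) / Real.log n) := upper n hn
      _ = (1 + 22 / Real.log n) * n := by ring
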